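/- Let A be a complex symmetric n×n matrix (A = Aᵀ) that is diagonalizable over ℂ. Then A admits a basis of eigenvectors X₁,…,Xₙ that is orthonormal with respect to the complex bilinear form ⟨v,w⟩ = Σₖ vₖwₖ, i.e. ⟨Xᵢ,Xⱼ⟩ = 0 for i ≠ j and ⟨Xᵢ,Xᵢ⟩ = 1 for all i. -/

import Mathlib

open Matrix Module

/-- A complex symmetric diagonalizable matrix admits a basis of
eigenvectors orthonormal for the complex bilinear form `⟨v,w⟩ = Σₖ vₖ wₖ`. -/
theorem stmt0 (n : ℕ) (A : Matrix (Fin n) (Fin n) ℂ) (hsymm : A.IsSymm)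
    (hdiag : ∃ (P D : Matrix (Fin n) (Fin n) ℂ),
      IsUnit P.det ∧ D.IsDiag ∧ A = P * D * P⁻¹) :
    ∃ X : Fin n → (Fin n → ℂ),
      LinearIndependent ℂ X ∧
      (∀ i, ∃ μ : ℂ, A.mulVec (X i) = μ • X i) ∧
      (∀ i j, i ≠ j → X i ⬝ᵥ X j = 0) ∧
      (∀ i, X i ⬝ᵥ X i = 1) := by
  classical
  obtain ⟨P, D, hP, hD, hA⟩ := hdiag
  set f : Module.End ℂ (Fin n → ℂ) := Matrix.mulVecLin A with hf
  set E : ℂ → Submodule ℂ (Fin n → ℂ) := fun μ => f.eigenspace μ with hE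
  have hmem : ∀ {μ : ℂ} {v : Fin n → ℂ}, v ∈ E μ ↔ A.mulVec v = μ • v := by
    intro μ v
    rw [hE, Module.End.mem_eigenspace_iff, hf, Matrix.mulVecLin_apply]
  -- columns of P are eigenvectors
  have hAP : A * P = P * D := by
    rw [hA, Matrix.mul_assoc, Matrix.nonsing_inv_mul P hP, Matrix.mul_one]
  have hcol : ∀ j : Fin n, Pᵀ j ∈ E (D j j) := by
    intro j
    rw [hmem]
    funext i
    have h1 : (A * P) i j = (P * D) i j := by rw [hAP]
    rw [Matrix.mul_apply, Matrix.mul_apply] at h1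
    have h2 : ∑ k, P i k * D k j = P i j * D j j :=
      Finset.sum_eq_single j (fun k _ hk => by rw [hD hk, mul_zero]) (by simp)
    show A.mulVec (fun k => P k j) i = (D j j • fun k : Fin n => P k j) i
    simp only [Matrix.mulVec, dotProduct, Pi.smul_apply, smul_eq_mul]
    rw [show (fun k => A i k * P k j) = fun k => A i k * P k j from rfl]
    calc ∑ k, A i k * P k j = P i j * D j j := by
          rw [show (∑ k, A i k * P k j) = ∑ k, A i k * (fun x => P x j) k from rfl]
          exact h1.trans h2
      _ = D j j * P i j := by ring
  have hsup : ⨆ μ, E μ = ⊤ := by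
    rw [eq_top_iff]
    intro v _
    have hv : v = P.mulVec (P⁻¹.mulVec v) := by
      rw [Matrix.mulVec_mulVec, Matrix.mul_nonsing_inv P hP, Matrix.one_mulVec]
    have hsum : P.mulVec (P⁻¹.mulVec v) = ∑ j, (P⁻¹.mulVec v) j • Pᵀ j := by
      funext i
      simp [Matrix.mulVec, dotProduct, Finset.sum_apply, mul_comm]
    rw [hv, hsum]
    refine Submodule.sum_mem _ fun j _ => ?_
    exact Submodule.mem_iSup_of_mem (D j j) (Submodule.smul_mem _ _ (hcol j))
  -- the bilinear form
  set B : LinearMap.BilinForm ℂ (Fin n → ℂ) :=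
    LinearMap.mk₂ ℂ (fun v w => v ⬝ᵥ w)
      (fun v v' w => add_dotProduct v v' w)
      (fun c v w => by simp [smul_dotProduct])
      (fun v w w' => dotProduct_add v w w')
      (fun c v w => by simp [dotProduct_smul]) with hBdef
  have hBapply : ∀ v w : Fin n → ℂ, B v w = v ⬝ᵥ w := fun v w => rfl
  have hBsymm : B.IsSymm := ⟨fun v w => by
    simp only [hBapply, RingHom.id_apply, dotProduct_comm]⟩
  -- A is self-adjoint for the bilinear form
  have hsA : ∀ v w : Fin n → ℂ, A.mulVec v ⬝ᵥ w = v ⬝ᵥ A.mulVec w := by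
    intro v w
    have h1 : w ᵥ* A = A.mulVec w := by rw [← Matrix.mulVec_transpose, hsymm.eq]
    rw [dotProduct_comm, Matrix.dotProduct_mulVec, h1, dotProduct_comm]
  -- distinct eigenspaces are orthogonal
  have hortho : ∀ {μ ν : ℂ}, μ ≠ ν → ∀ v ∈ E μ, ∀ w ∈ E ν, v ⬝ᵥ w = 0 := by
    intro μ ν hμν v hv w hw
    rw [hmem] at hv hw
    have h1 : μ * (v ⬝ᵥ w) = ν * (v ⬝ᵥ w) := by
      have h := hsA v w
      rw [hv, hw, smul_dotProduct, dotProduct_smul, smul_eq_mul, smul_eq_mul] at h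
      exact h
    have h2 : (μ - ν) * (v ⬝ᵥ w) = 0 := by linear_combination h1
    exact (mul_eq_zero.mp h2).resolve_left (sub_ne_zero.mpr hμν)
  -- internal direct sum
  have hInt : DirectSum.IsInternal E :=
    DirectSum.isInternal_submodule_of_iSupIndep_of_iSup_eq_top
      (hE ▸ f.eigenspaces_iSupIndep) hsup
  -- orthogonal basis on each eigenspace
  have hw : ∀ μ : ℂ, ∃ v : Basis (Fin (finrank ℂ (E μ))) ℂ (E μ),
      (B.domRestrict₁₂ (E μ) (E μ)).IsOrthoᵢ v := fun μ =>
    LinearMap.BilinForm.exists_orthogonal_basis ⟨fun x y => hBsymm.eq x y⟩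
  choose w hwortho using hw
  set b := hInt.collectedBasis w with hbdef
  have hb : ∀ a : (Σ μ : ℂ, Fin (finrank ℂ (E μ))), b a = ↑(w a.1 a.2) := fun a => by
    rw [hbdef, hInt.collectedBasis_coe w]
  -- pairwise orthogonality of the collected basis
  have hbo : ∀ a a' : (Σ μ : ℂ, Fin (finrank ℂ (E μ))), a ≠ a' → b a ⬝ᵥ b a' = 0 := by
    rintro ⟨μ, i⟩ ⟨ν, j⟩ hne
    rcases eq_or_ne μ ν with rfl | hμν
    · have hij : i ≠ j := fun h => hne (by rw [h])
      have h := hwortho μ hij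
      have h2 : B ↑(w μ i) ↑(w μ j) = 0 := h
      rw [hb, hb, ← hBapply]
      exact h2
    · exact hortho hμν _ (by rw [hb]; exact (w μ i).2) _ (by rw [hb]; exact (w ν j).2)
  -- nonzero diagonal
  have hdiagne : ∀ a, b a ⬝ᵥ b a ≠ 0 := by
    intro a ha
    have hzero : B (b a) = 0 := by
      apply b.ext
      intro a'
      rcases eq_or_ne a a' with rfl | hne
      · simpa [hBapply] using ha
      · simpa [hBapply] using hbo a a' hne
    have hba : b a = 0 := by
      funext k
      have hk := LinearMap.congr_fun hzero (Pi.single k 1)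
      rw [hBapply, dotProduct_single, mul_one] at hk
      exact hk
    exact b.ne_zero a hba
  -- reindex to Fin n
  haveI : Fintype (Σ μ : ℂ, Fin (finrank ℂ (E μ))) := FiniteDimensional.fintypeBasisIndex b
  have hcard : Fintype.card (Σ μ : ℂ, Fin (finrank ℂ (E μ))) = n :=
    (Module.finrank_eq_card_basis b).symm.trans (Module.finrank_fin_fun ℂ)
  let e : Fin n ≃ (Σ μ : ℂ, Fin (finrank ℂ (E μ))) := (Fintype.equivFinOfCardEq hcard).symm
  -- normalize
  have hsq : ∀ a, ∃ c : ℂ, c ^ 2 = b a ⬝ᵥ b a := fun a =>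
    IsAlgClosed.exists_pow_nat_eq _ (n := 2) two_pos
  choose c hc using hsq
  have hcne : ∀ a, c a ≠ 0 := fun a h =>
    hdiagne a (by rw [← hc a, h]; ring)
  let u : Fin n → ℂˣ := fun i => Units.mk0 (c (e i))⁻¹ (inv_ne_zero (hcne (e i)))
  let b' := (b.reindex e.symm).unitsSMul u
  have hb' : ∀ i, b' i = (c (e i))⁻¹ • b (e i) := fun i => by
    rw [show b' i = u i • (b.reindex e.symm) i from b.reindex e.symm |>.unitsSMul_apply i]
    rw [Module.Basis.reindex_apply, Equiv.symm_symm, Units.smul_def]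
    rfl
  refine ⟨⇑b', b'.linearIndependent, ?_, ?_, ?_⟩
  · intro i
    refine ⟨(e i).1, ?_⟩
    have hm : b (e i) ∈ E (e i).1 := by
      rw [hb]; exact (w (e i).1 (e i).2).2
    have heig := hmem.mp hm
    rw [hb' i, Matrix.mulVec_smul, heig, smul_comm]
  · intro i j hij
    have hne : e i ≠ e j := fun h => hij (e.injective h)
    rw [hb' i, hb' j, smul_dotProduct, dotProduct_smul, hbo _ _ hne]
    simp
  · intro i
    rw [hb' i, smul_dotProduct, dotProduct_smul, smul_eq_mul, smul_eq_mul, ← hc (e i)]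
    field_simp [hcne (e i)]
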